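/- (The circular cylinder is of finite type in H₃) Let c > 0 and suppose t² + a(t)² = c for all t ∈ I (so I ⊆ (−√c, √c) and a(t) = ±√(c − t²)). Then the surface S₁ : r(t,s) = (t, a(t), s) satisfies Δ(r₁) = (1/c)·t, Δ(r₂) = (1/c)·a(t), and Δ(r₃) = 0 on I × ℝ; i.e. the Euclidean circular cylinder satisfies Δr_i = λ_i r_i with λ₁ = λ₂ = 1/c and λ₃ = 0. -/

import Mathlib

noncomputable section

/-- Partial derivative with respect to the first (t) variable. -/
def pdx (f : ℝ × ℝ → ℝ) : ℝ × ℝ → ℝ := fun p => fderiv ℝ f p (1, 0)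

/-- Partial derivative with respect to the second (s) variable. -/
def pdy (f : ℝ × ℝ → ℝ) : ℝ × ℝ → ℝ := fun p => fderiv ℝ f p (0, 1)

/-- First fundamental form coefficient `E = 1 + a′² + ¼(a − t a′)²` of the ruled surface
`S₁ : r(t,s) = (t, a(t), s)` in the Heisenberg group `H₃`. -/
def aE (a : ℝ → ℝ) (t : ℝ) : ℝ := 1 + deriv a t ^ 2 + (a t - t * deriv a t) ^ 2 / 4

/-- First fundamental form coefficient `F = ½(a − t a′)` of `S₁`. -/
def aF (a : ℝ → ℝ) (t : ℝ) : ℝ := (a t - t * deriv a t) / 2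

/-- `W = √(EG − F²) = √(1 + a′²)` for `S₁` (here `G = 1`). -/
def aW (a : ℝ → ℝ) (t : ℝ) : ℝ := Real.sqrt (1 + deriv a t ^ 2)

/-- The Laplace–Beltrami operator of `S₁ : r(t,s) = (t, a(t), s)`, with the sign convention
`Δφ = −(1/W)[∂_t((G φ_t − F φ_s)/W) + ∂_s((−F φ_t + E φ_s)/W)]`, `G = 1`. -/
def lap1 (a : ℝ → ℝ) (φ : ℝ × ℝ → ℝ) : ℝ × ℝ → ℝ := fun p =>
  -(1 / aW a p.1) *
    (pdx (fun q => (1 * pdx φ q - aF a q.1 * pdy φ q) / aW a q.1) p +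
     pdy (fun q => (-(aF a q.1) * pdx φ q + aE a q.1 * pdy φ q) / aW a q.1) p)

lemma not_diff_comp {h : ℝ → ℝ} {p : ℝ × ℝ} (H : ¬ DifferentiableAt ℝ h p.1) :
    ¬ DifferentiableAt ℝ (fun q : ℝ × ℝ => h q.1) p := by
  intro hd
  have h3 : DifferentiableAt ℝ (fun t : ℝ => (t, p.2)) p.1 :=
    differentiableAt_id.prodMk (differentiableAt_const p.2)
  have hd' : DifferentiableAt ℝ (fun q : ℝ × ℝ => h q.1) ((fun t : ℝ => (t, p.2)) p.1) := by
    simpa using hd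
  have h4 := hd'.comp p.1 h3
  exact H (by simpa [Function.comp_def] using h4)

lemma pdx_comp (h : ℝ → ℝ) (p : ℝ × ℝ) : pdx (fun q => h q.1) p = deriv h p.1 := by
  by_cases H : DifferentiableAt ℝ h p.1
  · have h1 : HasFDerivAt (fun q : ℝ × ℝ => h q.1)
        ((fderiv ℝ h p.1).comp (ContinuousLinearMap.fst ℝ ℝ ℝ)) p :=
      H.hasFDerivAt.comp p hasFDerivAt_fst
    show fderiv ℝ (fun q : ℝ × ℝ => h q.1) p (1, 0) = deriv h p.1
    rw [h1.fderiv]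
    simpa using fderiv_deriv (𝕜 := ℝ) (f := h) (x := p.1)
  · show fderiv ℝ (fun q : ℝ × ℝ => h q.1) p (1, 0) = deriv h p.1
    rw [fderiv_zero_of_not_differentiableAt (not_diff_comp H),
      deriv_zero_of_not_differentiableAt H]
    simp

lemma pdy_comp (h : ℝ → ℝ) (p : ℝ × ℝ) : pdy (fun q => h q.1) p = 0 := by
  by_cases H : DifferentiableAt ℝ h p.1
  · have h1 : HasFDerivAt (fun q : ℝ × ℝ => h q.1)
        ((fderiv ℝ h p.1).comp (ContinuousLinearMap.fst ℝ ℝ ℝ)) p :=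
      H.hasFDerivAt.comp p hasFDerivAt_fst
    show fderiv ℝ (fun q : ℝ × ℝ => h q.1) p (0, 1) = 0
    rw [h1.fderiv]; simp
  · show fderiv ℝ (fun q : ℝ × ℝ => h q.1) p (0, 1) = 0
    rw [fderiv_zero_of_not_differentiableAt (not_diff_comp H)]; simp

lemma pdx_snd (p : ℝ × ℝ) : pdx (fun q : ℝ × ℝ => q.2) p = 0 := by
  show fderiv ℝ (fun q : ℝ × ℝ => q.2) p (1, 0) = 0
  rw [(hasFDerivAt_snd (𝕜 := ℝ) (E := ℝ) (F := ℝ)).fderiv]; simp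

lemma pdy_snd (p : ℝ × ℝ) : pdy (fun q : ℝ × ℝ => q.2) p = 1 := by
  show fderiv ℝ (fun q : ℝ × ℝ => q.2) p (0, 1) = 1
  rw [(hasFDerivAt_snd (𝕜 := ℝ) (E := ℝ) (F := ℝ)).fderiv]; simp

lemma pdx_of_id (p : ℝ × ℝ) : pdx (fun q : ℝ × ℝ => q.1) p = 1 := by
  have := pdx_comp (fun x => x) p
  simpa using this

lemma pdy_of_id (p : ℝ × ℝ) : pdy (fun q : ℝ × ℝ => q.1) p = 0 :=
  pdy_comp (fun x => x) p

/-- **The circular cylinder is of finite type in `H₃`**: if `c > 0` and `t² + a(t)² = c` on `I`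
(so `a(t) = ±√(c − t²)`), then `S₁ : r(t,s) = (t, a(t), s)` satisfies `Δr₁ = (1/c)t`,
`Δr₂ = (1/c)a(t)` and `Δr₃ = 0` on `I × ℝ`, i.e. `Δr_i = λ_i r_i` with
`λ₁ = λ₂ = 1/c`, `λ₃ = 0`. -/
theorem circular_cylinder_finite_type
    (I : Set ℝ) (hI : IsOpen I) (hIne : I.Nonempty) (hIconn : I.OrdConnected)
    (a : ℝ → ℝ) (ha : ContDiffOn ℝ (⊤ : ℕ∞) a I)
    (c : ℝ) (hc : 0 < c) (hcyl : ∀ t ∈ I, t ^ 2 + a t ^ 2 = c) :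
    ∀ t ∈ I, ∀ s : ℝ,
      lap1 a (fun q => q.1) (t, s) = (1 / c) * t ∧
      lap1 a (fun q => a q.1) (t, s) = (1 / c) * a t ∧
      lap1 a (fun q => q.2) (t, s) = 0 := by
  have hdiff : ∀ t ∈ I, HasDerivAt a (deriv a t) t := fun t ht =>
    ((ha.differentiableOn (by simp)).differentiableAt (hI.mem_nhds ht)).hasDerivAt
  have hrel : ∀ t ∈ I, a t * deriv a t = -t := by
    intro t ht
    have h1 : HasDerivAt (fun u => u ^ 2 + a u ^ 2)
        (2 * t + 2 * (a t * deriv a t)) t := by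
      have h2 : HasDerivAt (fun u => u ^ 2 + a u ^ 2) _ t := (hasDerivAt_pow 2 t).add ((hdiff t ht).pow 2)
      convert h2 using 1
      push_cast; ring
    have hevc : (fun u => u ^ 2 + a u ^ 2) =ᶠ[nhds t] fun _ => c := by
      filter_upwards [hI.mem_nhds ht] with u hu using hcyl u hu
    have h3 : HasDerivAt (fun u => u ^ 2 + a u ^ 2) 0 t :=
      (hasDerivAt_const t c).congr_of_eventuallyEq hevc
    have := h1.unique h3
    linarith
  have hane : ∀ t ∈ I, a t ≠ 0 := by
    intro t ht h0
    have h1 := hrel t ht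
    rw [h0] at h1
    have ht0 : t = 0 := by linarith
    have h2 := hcyl t ht
    rw [h0] at h2
    rw [ht0] at h2
    norm_num at h2
    exact absurd h2.symm (ne_of_gt hc)
  have hs : (0:ℝ) < Real.sqrt c := Real.sqrt_pos.mpr hc
  have hss : Real.sqrt c * Real.sqrt c = c := Real.mul_self_sqrt hc.le
  intro t₀ ht₀ s
  set σ : ℝ := if 0 < a t₀ then 1 else -1 with hσdef
  have hane₀ := hane t₀ ht₀
  have hσa : 0 < σ * a t₀ := by
    by_cases h : 0 < a t₀
    · simp [hσdef, h]
    · have : a t₀ < 0 := lt_of_le_of_ne (not_lt.mp h) hane₀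
      simp only [hσdef, if_neg h]; nlinarith
  have hσσ : σ * σ = 1 := by
    by_cases h : 0 < a t₀ <;> simp [hσdef, h]
  have habs : ∀ u, 0 < σ * a u → |a u| = σ * a u := by
    intro u hu
    by_cases h : 0 < a t₀
    · simp only [hσdef, if_pos h] at hu ⊢
      rw [abs_of_pos (by linarith)]; ring
    · simp only [hσdef, if_neg h] at hu ⊢
      rw [abs_of_neg (by linarith)]; ring
  have hW : ∀ u ∈ I, 0 < σ * a u → aW a u = Real.sqrt c / (σ * a u) := by
    intro u hu hσu
    have hau := hane u hu
    have hd : deriv a u = -u / a u := by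
      rw [eq_div_iff hau]
      have := hrel u hu
      nlinarith [this]
    have hc' := hcyl u hu
    have h1 : 1 + deriv a u ^ 2 = c / a u ^ 2 := by
      rw [hd]; field_simp; linarith
    rw [aW, h1, Real.sqrt_div' c (by positivity), Real.sqrt_sq_eq_abs, habs u hσu]
  have hF : ∀ u ∈ I, aF a u = c / (2 * a u) := by
    intro u hu
    have hau := hane u hu
    have hd : deriv a u = -u / a u := by
      rw [eq_div_iff hau]
      have := hrel u hu
      nlinarith [this]
    have hc' := hcyl u hu
    rw [aF, hd]
    field_simp
    linear_combination hc'
  have hev : ∀ᶠ u in nhds t₀, u ∈ I ∧ 0 < σ * a u := by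
    have h1 : ∀ᶠ u in nhds t₀, u ∈ I := hI.eventually_mem ht₀
    have hca : ContinuousAt (fun u => σ * a u) t₀ :=
      continuousAt_const.mul (hdiff t₀ ht₀).continuousAt
    have h2 : ∀ᶠ u in nhds t₀, 0 < σ * a u :=
      hca.eventually (eventually_gt_nhds hσa)
    filter_upwards [h1, h2] with u hu1 hu2 using ⟨hu1, hu2⟩
  have hW₀ : aW a t₀ = Real.sqrt c / (σ * a t₀) := hW t₀ ht₀ hσa
  have hinv : 1 / aW a t₀ = σ / Real.sqrt c * a t₀ := by
    rw [hW₀, one_div_div]; ring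
  have hd1 : deriv (fun u => 1 / aW a u) t₀ = σ / Real.sqrt c * deriv a t₀ := by
    have he : (fun u => 1 / aW a u) =ᶠ[nhds t₀] fun u => σ / Real.sqrt c * a u := by
      filter_upwards [hev] with u hu
      rw [hW u hu.1 hu.2, one_div_div]; ring
    rw [he.deriv_eq]
    exact ((hdiff t₀ ht₀).const_mul (σ / Real.sqrt c)).deriv
  have hd2 : deriv (fun u => deriv a u / aW a u) t₀ = -(σ / Real.sqrt c) := by
    have he : (fun u => deriv a u / aW a u) =ᶠ[nhds t₀]
        fun u => -(σ / Real.sqrt c) * u := by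
      filter_upwards [hev] with u hu
      rw [hW u hu.1 hu.2, div_div_eq_mul_div]
      have h1 : deriv a u * (σ * a u) = σ * (a u * deriv a u) := by ring
      rw [h1, hrel u hu.1]; ring
    rw [he.deriv_eq]
    simpa using ((hasDerivAt_id t₀).const_mul (-(σ / Real.sqrt c))).deriv
  have hd3 : deriv (fun u => -aF a u / aW a u) t₀ = 0 := by
    have he : (fun u => -aF a u / aW a u) =ᶠ[nhds t₀]
        fun _ => -(σ * Real.sqrt c / 2) := by
      filter_upwards [hev] with u hu
      rw [hW u hu.1 hu.2, hF u hu.1, div_div_eq_mul_div]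
      have hau := hane u hu.1
      field_simp
      linear_combination σ * hss
    rw [he.deriv_eq, deriv_const]
  have harel := hrel t₀ ht₀
  refine ⟨?_, ?_, ?_⟩
  · -- φ = fst
    have E1 : pdx (fun q : ℝ × ℝ => (1 * pdx (fun q : ℝ × ℝ => q.1) q
        - aF a q.1 * pdy (fun q : ℝ × ℝ => q.1) q) / aW a q.1) (t₀, s)
        = deriv (fun u => 1 / aW a u) t₀ := by
      have e1 : (fun q : ℝ × ℝ => (1 * pdx (fun q : ℝ × ℝ => q.1) q
          - aF a q.1 * pdy (fun q : ℝ × ℝ => q.1) q) / aW a q.1)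
          = fun q : ℝ × ℝ => 1 / aW a q.1 := by
        funext q; rw [pdx_of_id, pdy_of_id]; ring
      rw [e1]
      exact pdx_comp (fun u => 1 / aW a u) (t₀, s)
    have E2 : pdy (fun q : ℝ × ℝ => (-(aF a q.1) * pdx (fun q : ℝ × ℝ => q.1) q
        + aE a q.1 * pdy (fun q : ℝ × ℝ => q.1) q) / aW a q.1) (t₀, s) = 0 := by
      have e2 : (fun q : ℝ × ℝ => (-(aF a q.1) * pdx (fun q : ℝ × ℝ => q.1) q
          + aE a q.1 * pdy (fun q : ℝ × ℝ => q.1) q) / aW a q.1)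
          = fun q : ℝ × ℝ => -aF a q.1 / aW a q.1 := by
        funext q; rw [pdx_of_id, pdy_of_id]; ring
      rw [e2]
      exact pdy_comp (fun u => -aF a u / aW a u) (t₀, s)
    show -(1 / aW a ((t₀, s) : ℝ × ℝ).1) * _ = (1 / c) * t₀
    rw [E1, E2, add_zero, hd1]
    show -(1 / aW a t₀) * _ = _
    rw [hinv]
    calc -(σ / Real.sqrt c * a t₀) * (σ / Real.sqrt c * deriv a t₀)
        = (σ * σ) * (a t₀ * deriv a t₀) * (-(1 / (Real.sqrt c * Real.sqrt c))) := by
          ring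
      _ = (1 / c) * t₀ := by rw [hσσ, harel, hss]; ring
  · -- φ = a ∘ fst
    have E1 : pdx (fun q : ℝ × ℝ => (1 * pdx (fun q : ℝ × ℝ => a q.1) q
        - aF a q.1 * pdy (fun q : ℝ × ℝ => a q.1) q) / aW a q.1) (t₀, s)
        = deriv (fun u => deriv a u / aW a u) t₀ := by
      have e1 : (fun q : ℝ × ℝ => (1 * pdx (fun q : ℝ × ℝ => a q.1) q
          - aF a q.1 * pdy (fun q : ℝ × ℝ => a q.1) q) / aW a q.1)
          = fun q : ℝ × ℝ => deriv a q.1 / aW a q.1 := by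
        funext q; rw [pdx_comp a q, pdy_comp a q]; ring
      rw [e1]
      exact pdx_comp (fun u => deriv a u / aW a u) (t₀, s)
    have E2 : pdy (fun q : ℝ × ℝ => (-(aF a q.1) * pdx (fun q : ℝ × ℝ => a q.1) q
        + aE a q.1 * pdy (fun q : ℝ × ℝ => a q.1) q) / aW a q.1) (t₀, s) = 0 := by
      have e2 : (fun q : ℝ × ℝ => (-(aF a q.1) * pdx (fun q : ℝ × ℝ => a q.1) q
          + aE a q.1 * pdy (fun q : ℝ × ℝ => a q.1) q) / aW a q.1)
          = fun q : ℝ × ℝ => -aF a q.1 * deriv a q.1 / aW a q.1 := by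
        funext q; rw [pdx_comp a q, pdy_comp a q]; ring
      rw [e2]
      exact pdy_comp (fun u => -aF a u * deriv a u / aW a u) (t₀, s)
    show -(1 / aW a ((t₀, s) : ℝ × ℝ).1) * _ = (1 / c) * a t₀
    rw [E1, E2, add_zero, hd2]
    show -(1 / aW a t₀) * _ = _
    rw [hinv]
    calc -(σ / Real.sqrt c * a t₀) * -(σ / Real.sqrt c)
        = (σ * σ) * a t₀ * (1 / (Real.sqrt c * Real.sqrt c)) := by ring
      _ = (1 / c) * a t₀ := by rw [hσσ, hss]; ring
  · -- φ = snd
    have E1 : pdx (fun q : ℝ × ℝ => (1 * pdx (fun q : ℝ × ℝ => q.2) q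
        - aF a q.1 * pdy (fun q : ℝ × ℝ => q.2) q) / aW a q.1) (t₀, s)
        = deriv (fun u => -aF a u / aW a u) t₀ := by
      have e1 : (fun q : ℝ × ℝ => (1 * pdx (fun q : ℝ × ℝ => q.2) q
          - aF a q.1 * pdy (fun q : ℝ × ℝ => q.2) q) / aW a q.1)
          = fun q : ℝ × ℝ => -aF a q.1 / aW a q.1 := by
        funext q; rw [pdx_snd, pdy_snd]; ring
      rw [e1]
      exact pdx_comp (fun u => -aF a u / aW a u) (t₀, s)
    have E2 : pdy (fun q : ℝ × ℝ => (-(aF a q.1) * pdx (fun q : ℝ × ℝ => q.2) q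
        + aE a q.1 * pdy (fun q : ℝ × ℝ => q.2) q) / aW a q.1) (t₀, s) = 0 := by
      have e2 : (fun q : ℝ × ℝ => (-(aF a q.1) * pdx (fun q : ℝ × ℝ => q.2) q
          + aE a q.1 * pdy (fun q : ℝ × ℝ => q.2) q) / aW a q.1)
          = fun q : ℝ × ℝ => aE a q.1 / aW a q.1 := by
        funext q; rw [pdx_snd, pdy_snd]; ring
      rw [e2]
      exact pdy_comp (fun u => aE a u / aW a u) (t₀, s)
    show -(1 / aW a ((t₀, s) : ℝ × ℝ).1) * _ = 0
    rw [E1, E2, add_zero, hd3, mul_zero]
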